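/- For a prime p ≥ 5 with p ≡ 2 (mod 3) and any nonnegative integers k, n and integer j with p ∤ j, EO-bar(p^{2(k+1)} n + p^{2k+1} j + (p^{2(k+1)} - 1)/3) ≡ 0 (mod 2). In particular, EO-bar(25n + 5j + 8) ≡ 0 (mod 2) whenever 5 ∤ j. -/

import Mathlib

open PowerSeries

/-- `(q^a; q^c)_∞ = ∏_{i ≥ 0} (1 - q^{a + c·i})` as a formal power series in `q = X`
(for `a ≥ 1`, the `n`-th coefficient only depends on the first `n+1` factors). -/
noncomputable def qp (a c : ℕ) : PowerSeries ℚ :=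
  PowerSeries.mk fun n =>
    PowerSeries.coeff (R := ℚ) n
      (∏ i ∈ Finset.range (n + 1), (1 - (PowerSeries.X : PowerSeries ℚ) ^ (a + c * i)))


noncomputable def qpR (R : Type*) [CommRing R] (a c : ℕ) : PowerSeries R :=
  PowerSeries.mk fun n =>
    PowerSeries.coeff (R := R) n
      (∏ i ∈ Finset.range (n + 1), (1 - (PowerSeries.X : PowerSeries R) ^ (a + c * i)))

theorem X_pow_dvd_prod_sub_one {R : Type*} [CommRing R] (K : ℕ) (e : ℕ → ℕ) (t : Finset ℕ)
    (he : ∀ i ∈ t, K ≤ e i) :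
    (X : PowerSeries R) ^ K ∣ (∏ i ∈ t, (1 - X ^ e i)) - 1 := by
  classical
  induction t using Finset.induction_on with
  | empty => simp
  | @insert j tt hj ih =>
    rw [Finset.prod_insert hj]
    have h1 : (X : PowerSeries R) ^ K ∣ (∏ i ∈ tt, ((1 : PowerSeries R) - X ^ e i)) - 1 :=
      ih fun i hi => he i (Finset.mem_insert_of_mem hi)
    have h2 : (X : PowerSeries R) ^ K ∣ (X : PowerSeries R) ^ e j :=
      pow_dvd_pow _ (he j (Finset.mem_insert_self j tt))
    have h3 : ((1 : PowerSeries R) - X ^ e j) * (∏ i ∈ tt, ((1 : PowerSeries R) - X ^ e i)) - 1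
        = ((∏ i ∈ tt, ((1 : PowerSeries R) - X ^ e i)) - 1)
          - X ^ e j * (∏ i ∈ tt, ((1 : PowerSeries R) - X ^ e i)) := by ring
    rw [h3]
    exact dvd_sub h1 (h2.mul_right _)

theorem coeff_eq_of_X_pow_dvd {R : Type*} [CommRing R] {K : ℕ} {F G : PowerSeries R}
    (h : (X : PowerSeries R) ^ K ∣ F - G) {n : ℕ} (hn : n < K) :
    coeff (R := R) n F = coeff (R := R) n G := by
  have := (PowerSeries.X_pow_dvd_iff.mp h) n hn
  rw [map_sub] at this
  exact sub_eq_zero.mp this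

theorem X_pow_dvd_qpR_sub_prod {R : Type*} [CommRing R] {a c : ℕ} (ha : 1 ≤ a) (hc : 1 ≤ c)
    (M : ℕ) :
    (X : PowerSeries R) ^ M ∣ qpR R a c - ∏ i ∈ Finset.range M, (1 - X ^ (a + c * i)) := by
  rw [PowerSeries.X_pow_dvd_iff]
  intro n hn
  rw [map_sub, sub_eq_zero]
  have hcoeff : coeff (R := R) n (qpR R a c)
      = coeff (R := R) n (∏ i ∈ Finset.range (n + 1), (1 - X ^ (a + c * i))) := by
    simp [qpR]
  rw [hcoeff]
  -- now compare prod over range (n+1) and range M, with n+1 ≤ M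
  have hM : n + 1 ≤ M := hn
  have hsplit : (∏ i ∈ Finset.range M, (1 - (X : PowerSeries R) ^ (a + c * i)))
      = (∏ i ∈ Finset.range (n+1), (1 - X ^ (a + c * i)))
        * ∏ i ∈ Finset.Ico (n+1) M, (1 - X ^ (a + c * i)) := by
    rw [Finset.range_eq_Ico, Finset.range_eq_Ico]
    exact (Finset.prod_Ico_consecutive (f := fun i => (1 - (X : PowerSeries R) ^ (a + c * i))) (Nat.zero_le (n+1)) hM).symm
  have hdvd : (X : PowerSeries R) ^ (n+1)
      ∣ (∏ i ∈ Finset.Ico (n+1) M, (1 - X ^ (a + c * i))) - 1 := by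
    apply X_pow_dvd_prod_sub_one
    intro i hi
    have : n + 1 ≤ i := (Finset.mem_Ico.mp hi).1
    calc n + 1 ≤ i := this
    _ ≤ c * i := Nat.le_mul_of_pos_left i hc
    _ ≤ a + c * i := Nat.le_add_left _ _
  have : (X : PowerSeries R) ^ (n+1)
      ∣ (∏ i ∈ Finset.range M, (1 - X ^ (a + c * i)))
        - ∏ i ∈ Finset.range (n+1), (1 - X ^ (a + c * i)) := by
    rw [hsplit]
    have := hdvd.mul_left (∏ i ∈ Finset.range (n+1), (1 - (X:PowerSeries R) ^ (a + c * i)))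
    calc (X : PowerSeries R) ^ (n+1) ∣ _ := this
    _ = _ := by ring
  exact (coeff_eq_of_X_pow_dvd this (Nat.lt_succ_self n)).symm

theorem map_qpR {R S : Type*} [CommRing R] [CommRing S] (f : R →+* S) (a c : ℕ) :
    PowerSeries.map f (qpR R a c) = qpR S a c := by
  ext n
  simp only [PowerSeries.coeff_map, qpR, PowerSeries.coeff_mk]
  rw [← PowerSeries.coeff_map]
  congr 1
  simp [map_prod]

theorem constantCoeff_qpR {R : Type*} [CommRing R] {a : ℕ} (ha : 1 ≤ a) (c : ℕ) :
    PowerSeries.constantCoeff (R := R) (qpR R a c) = 1 := by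
  have : PowerSeries.constantCoeff (R := R) (qpR R a c) = coeff (R := R) 0 (qpR R a c) := by
    simp [PowerSeries.coeff_zero_eq_constantCoeff]
  rw [this]
  simp only [qpR, PowerSeries.coeff_mk]
  rw [Finset.range_one, Finset.prod_singleton]
  simp [PowerSeries.coeff_zero_eq_constantCoeff, constantCoeff_X,
    zero_pow (by omega : a ≠ 0)]
theorem two_eq_zero_PS : (2 : PowerSeries (ZMod 2)) = 0 := by
  rw [show (2 : PowerSeries (ZMod 2)) = PowerSeries.C (R := ZMod 2) 2 from (map_ofNat _ 2).symm,
    show (2 : ZMod 2) = 0 from rfl, map_zero]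

theorem qpR_sq {a c : ℕ} (ha : 1 ≤ a) (hc : 1 ≤ c) :
    (qpR (ZMod 2) a c) ^ 2 = qpR (ZMod 2) (2*a) (2*c) := by
  ext n
  have h1 := X_pow_dvd_qpR_sub_prod (R := ZMod 2) ha hc (n+1)
  have h2 := X_pow_dvd_qpR_sub_prod (R := ZMod 2) (by omega : 1 ≤ 2*a) (by omega : 1 ≤ 2*c) (n+1)
  have hsq : (X : PowerSeries (ZMod 2))^(n+1) ∣ (qpR (ZMod 2) a c)^2
      - (∏ i ∈ Finset.range (n+1), ((1 : PowerSeries (ZMod 2)) - X^(a+c*i)))^2 := by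
    have hfac : (qpR (ZMod 2) a c)^2
        - (∏ i ∈ Finset.range (n+1), ((1 : PowerSeries (ZMod 2)) - X^(a+c*i)))^2
        = (qpR (ZMod 2) a c - ∏ i ∈ Finset.range (n+1), ((1 : PowerSeries (ZMod 2)) - X^(a+c*i)))
          * (qpR (ZMod 2) a c + ∏ i ∈ Finset.range (n+1), ((1:PowerSeries (ZMod 2)) - X^(a+c*i))) := by
      ring
    rw [hfac]
    exact h1.mul_right _
  have hPP : (∏ i ∈ Finset.range (n+1), ((1 : PowerSeries (ZMod 2)) - X^(a+c*i)))^2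
      = ∏ i ∈ Finset.range (n+1), ((1 : PowerSeries (ZMod 2)) - X^(2*a+2*c*i)) := by
    rw [← Finset.prod_pow]
    apply Finset.prod_congr rfl
    intro i _
    have he : 2*a + 2*c*i = 2*(a + c*i) := by ring
    rw [he]
    linear_combination ((X : PowerSeries (ZMod 2))^(a+c*i)
      * X^(a+c*i) - X^(a+c*i)) * two_eq_zero_PS
  rw [hPP] at hsq
  calc coeff (R := ZMod 2) n ((qpR (ZMod 2) a c)^2)
      = coeff (R := ZMod 2) n (∏ i ∈ Finset.range (n+1), ((1:PowerSeries (ZMod 2)) - X^(2*a+2*c*i))) :=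
        coeff_eq_of_X_pow_dvd hsq (Nat.lt_succ_self n)
    _ = coeff (R := ZMod 2) n (qpR (ZMod 2) (2*a) (2*c)) :=
        (coeff_eq_of_X_pow_dvd h2 (Nat.lt_succ_self n)).symm

theorem EObar_eq_qp88 (EObar : ℕ → ℕ)
    (h : PowerSeries.mk (fun n => (EObar n : ℚ)) = qp 4 4 ^ 3 * (qp 2 2 ^ 2)⁻¹) :
    PowerSeries.mk (fun n => (EObar n : ZMod 2)) = qpR (ZMod 2) 8 8 := by
  have hqp : ∀ a c : ℕ, qp a c = qpR ℚ a c := fun a c => rfl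
  -- constant coeff of qp 2 2 ^ 2 nonzero
  have hc0 : PowerSeries.constantCoeff (R := ℚ) ((qp 2 2)^2) ≠ 0 := by
    rw [map_pow, hqp, constantCoeff_qpR (by norm_num)]
    norm_num
  have hQ : PowerSeries.mk (fun n => (EObar n : ℚ)) * (qp 2 2)^2 = (qp 4 4)^3 := by
    rw [h, mul_assoc, PowerSeries.inv_mul_cancel _ hc0, mul_one]
  -- transfer to ℤ
  have hZ : PowerSeries.mk (fun n => (EObar n : ℤ)) * (qpR ℤ 2 2)^2 = (qpR ℤ 4 4)^3 := by
    have hinj : Function.Injective (PowerSeries.map (Int.castRingHom ℚ)) := by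
      intro x y hxy
      ext k
      have hk := congrArg (coeff (R := ℚ) k) hxy
      simp only [PowerSeries.coeff_map, eq_intCast, Int.cast_inj] at hk
      exact hk
    apply hinj
    rw [map_mul, map_pow, map_pow, map_qpR, map_qpR]
    have : PowerSeries.map (Int.castRingHom ℚ) (PowerSeries.mk fun n => ((EObar n : ℤ)))
        = PowerSeries.mk (fun n => (EObar n : ℚ)) := by
      ext k; simp
    rw [this, ← hqp, ← hqp, hQ]
  -- transfer to ZMod 2
  have h2 : PowerSeries.mk (fun n => (EObar n : ZMod 2)) * (qpR (ZMod 2) 2 2)^2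
      = (qpR (ZMod 2) 4 4)^3 := by
    have := congrArg (PowerSeries.map (Int.castRingHom (ZMod 2))) hZ
    rw [map_mul, map_pow, map_pow, map_qpR, map_qpR] at this
    have hmk : PowerSeries.map (Int.castRingHom (ZMod 2)) (PowerSeries.mk fun n => ((EObar n : ℤ)))
        = PowerSeries.mk (fun n => (EObar n : ZMod 2)) := by
      ext k; simp
    rwa [hmk] at this
  have h22 : (qpR (ZMod 2) 2 2)^2 = qpR (ZMod 2) 4 4 := by
    have := qpR_sq (a := 2) (c := 2) (by norm_num) (by norm_num)
    norm_num at this; exact this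
  have h44 : (qpR (ZMod 2) 4 4)^2 = qpR (ZMod 2) 8 8 := by
    have := qpR_sq (a := 4) (c := 4) (by norm_num) (by norm_num)
    norm_num at this; exact this
  rw [h22] at h2
  have hne : qpR (ZMod 2) 4 4 ≠ 0 := by
    intro hzero
    have := constantCoeff_qpR (R := ZMod 2) (by norm_num : (1:ℕ) ≤ 4) 4
    rw [hzero, map_zero] at this
    exact one_ne_zero this.symm
  have : PowerSeries.mk (fun n => (EObar n : ZMod 2)) * qpR (ZMod 2) 4 4
      = qpR (ZMod 2) 8 8 * qpR (ZMod 2) 4 4 := by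
    rw [h2, ← h44]; ring
  exact mul_right_cancel₀ hne this

theorem coeff_qp88 (N : ℕ) :
    coeff (R := ZMod 2) N (qpR (ZMod 2) 8 8)
      = ∑ A ∈ (Finset.Icc 1 (N+1)).powerset,
          (if N = 8 * ∑ j ∈ A, j then (1 : ZMod 2) else 0) := by
  classical
  have step1 : coeff (R := ZMod 2) N (qpR (ZMod 2) 8 8)
      = coeff (R := ZMod 2) N (∏ i ∈ Finset.range (N+1),
          ((X : PowerSeries (ZMod 2)) ^ (8 + 8*i) + 1)) := by
    simp only [qpR, PowerSeries.coeff_mk]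
    congr 1
    apply Finset.prod_congr rfl
    intro i _
    linear_combination (-(X : PowerSeries (ZMod 2))^(8+8*i)) * two_eq_zero_PS
  have step2 : (∏ i ∈ Finset.range (N+1), ((X : PowerSeries (ZMod 2)) ^ (8 + 8*i) + 1))
      = ∏ j ∈ Finset.Icc 1 (N+1), ((X : PowerSeries (ZMod 2)) ^ (8*j) + 1) := by
    rw [← Finset.Ico_add_one_right_eq_Icc, Finset.prod_Ico_eq_prod_range,
      show (N + 1 + 1 - 1) = N + 1 from rfl]
    apply Finset.prod_congr rfl
    intro i _
    congr 2
    ring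
  rw [step1, step2, Finset.prod_add, map_sum]
  apply Finset.sum_congr rfl
  intro A _
  simp only [Finset.prod_const_one, mul_one, Finset.prod_pow_eq_pow_sum,
    PowerSeries.coeff_X_pow, ← Finset.mul_sum]
  rw [Finset.mul_sum]

open Finset

def fd (A : Finset ℕ) (h : A.Nonempty ∧ 0 ∉ A) : ℕ :=
  ((Finset.range (A.max' h.1 + 1)).filter (fun x => x ∉ A)).max'
    ⟨0, Finset.mem_filter.mpr ⟨Finset.mem_range.mpr (Nat.succ_pos _), h.2⟩⟩

def franklin (A : Finset ℕ) : Finset ℕ :=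
  if h : A.Nonempty ∧ 0 ∉ A then
    if A.min' h.1 ≤ A.max' h.1 - fd A h then
      ((A.erase (A.min' h.1)) \ Finset.Icc (A.max' h.1 - A.min' h.1 + 1) (A.max' h.1))
        ∪ Finset.Icc (A.max' h.1 - A.min' h.1 + 2) (A.max' h.1 + 1)
    else
      ((A \ Finset.Icc (fd A h + 1) (A.max' h.1)) ∪ Finset.Icc (fd A h) (A.max' h.1 - 1))
        ∪ {A.max' h.1 - fd A h}
  else A

lemma fd_mem_filter (A : Finset ℕ) (h : A.Nonempty ∧ 0 ∉ A) :
    fd A h ∈ (Finset.range (A.max' h.1 + 1)).filter (fun x => x ∉ A) := by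
  unfold fd; exact Finset.max'_mem _ _

lemma fd_notMem (A : Finset ℕ) (h : A.Nonempty ∧ 0 ∉ A) : fd A h ∉ A :=
  (Finset.mem_filter.mp (fd_mem_filter A h)).2

lemma fd_le (A : Finset ℕ) (h : A.Nonempty ∧ 0 ∉ A) : fd A h ≤ A.max' h.1 := by
  have := Finset.mem_range.mp (Finset.mem_filter.mp (fd_mem_filter A h)).1
  omega

lemma fd_run (A : Finset ℕ) (h : A.Nonempty ∧ 0 ∉ A) :
    ∀ x, fd A h < x → x ≤ A.max' h.1 → x ∈ A := by
  intro x hx1 hx2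
  by_contra hx
  have hmem : x ∈ (Finset.range (A.max' h.1 + 1)).filter (fun x => x ∉ A) :=
    Finset.mem_filter.mpr ⟨Finset.mem_range.mpr (by omega), hx⟩
  have hle : x ≤ fd A h := by unfold fd; exact Finset.le_max' _ x hmem
  omega

lemma fd_lt (A : Finset ℕ) (h : A.Nonempty ∧ 0 ∉ A) : fd A h < A.max' h.1 := by
  have h1 := fd_le A h
  have h2 := fd_notMem A h
  have h3 := A.max'_mem h.1
  rcases Nat.lt_or_ge (fd A h) (A.max' h.1) with h4 | h4
  · exact h4
  · exfalso; have : fd A h = A.max' h.1 := le_antisymm h1 h4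
    rw [this] at h2; exact h2 h3

lemma fd_eq (A : Finset ℕ) (h : A.Nonempty ∧ 0 ∉ A) {b : ℕ} (hb : b ∉ A)
    (hba : b ≤ A.max' h.1) (hr : ∀ x, b < x → x ≤ A.max' h.1 → x ∈ A) : fd A h = b := by
  apply le_antisymm
  · by_contra hlt
    push_neg at hlt
    exact fd_notMem A h (hr _ hlt (fd_le A h))
  · unfold fd
    exact Finset.le_max' _ b (Finset.mem_filter.mpr ⟨Finset.mem_range.mpr (by omega), hb⟩)

lemma max'_eq (A : Finset ℕ) (h : A.Nonempty) {b : ℕ} (hb : b ∈ A)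
    (hall : ∀ x ∈ A, x ≤ b) : A.max' h = b :=
  le_antisymm (Finset.max'_le _ _ _ hall) (Finset.le_max' _ _ hb)

lemma min'_eq (A : Finset ℕ) (h : A.Nonempty) {b : ℕ} (hb : b ∈ A)
    (hall : ∀ x ∈ A, b ≤ x) : A.min' h = b :=
  le_antisymm (Finset.min'_le _ _ hb) (Finset.le_min' _ _ _ hall)

lemma franklin_pos_le (A : Finset ℕ) (h : A.Nonempty ∧ 0 ∉ A)
    (hcase : A.min' h.1 ≤ A.max' h.1 - fd A h) :
    franklin A = ((A.erase (A.min' h.1))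
        \ Finset.Icc (A.max' h.1 - A.min' h.1 + 1) (A.max' h.1))
      ∪ Finset.Icc (A.max' h.1 - A.min' h.1 + 2) (A.max' h.1 + 1) := by
  rw [franklin, dif_pos h, if_pos hcase]

lemma franklin_pos_gt (A : Finset ℕ) (h : A.Nonempty ∧ 0 ∉ A)
    (hcase : ¬ A.min' h.1 ≤ A.max' h.1 - fd A h) :
    franklin A = ((A \ Finset.Icc (fd A h + 1) (A.max' h.1))
        ∪ Finset.Icc (fd A h) (A.max' h.1 - 1))
      ∪ {A.max' h.1 - fd A h} := by
  rw [franklin, dif_pos h, if_neg hcase]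

lemma bounds_of_mem (A : Finset ℕ) (h : A.Nonempty ∧ 0 ∉ A) {x : ℕ} (hx : x ∈ A) :
    A.min' h.1 ≤ x ∧ x ≤ A.max' h.1 :=
  ⟨Finset.min'_le _ _ hx, Finset.le_max' _ _ hx⟩

lemma case1 (A : Finset ℕ) (h : A.Nonempty ∧ 0 ∉ A) (s a d : ℕ)
    (hs : s = A.min' h.1) (ha : a = A.max' h.1) (hd : d = fd A h)
    (hcase : s ≤ a - d) (hnf : 2 * s ≤ a) :
    (∑ x ∈ franklin A, x) = (∑ x ∈ A, x) ∧ s ∉ franklin A ∧ 0 ∉ franklin A ∧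
      franklin (franklin A) = A := by
  have hs1 : 1 ≤ s := by
    have := A.min'_mem h.1
    rw [← hs] at this
    rcases Nat.eq_zero_or_pos s with h' | h'
    · exfalso; rw [h'] at this; exact h.2 this
    · exact h'
  have hsa : s ≤ a := by
    rw [hs, ha]; exact Finset.min'_le _ _ (A.max'_mem h.1)
  have hbounds : ∀ x ∈ A, s ≤ x ∧ x ≤ a := by
    intro x hx; rw [hs, ha]; exact bounds_of_mem A h hx
  have hdlt : d < a := by rw [hd, ha]; exact fd_lt A h
  have hdnot : d ∉ A := by rw [hd]; exact fd_notMem A h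
  have hrun : ∀ x, d < x → x ≤ a → x ∈ A := by
    rw [hd, ha]; exact fd_run A h
  have hsmem : s ∈ A := by rw [hs]; exact A.min'_mem h.1
  have hamem : a ∈ A := by rw [ha]; exact A.max'_mem h.1
  -- the image set
  set C : Finset ℕ := (A.erase s) \ Finset.Icc (a - s + 1) a with hC
  set F : Finset ℕ := C ∪ Finset.Icc (a - s + 2) (a + 1) with hF
  have hBsub : Finset.Icc (a - s + 1) a ⊆ A := by
    intro x hx
    rw [Finset.mem_Icc] at hx
    exact hrun x (by omega) hx.2
  have hCmem : ∀ x, x ∈ C ↔ x ∈ A ∧ s + 1 ≤ x ∧ x ≤ a - s := by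
    intro x
    rw [hC, Finset.mem_sdiff, Finset.mem_erase, Finset.mem_Icc]
    constructor
    · rintro ⟨⟨hxs, hxA⟩, hxB⟩
      have hb := hbounds x hxA
      exact ⟨hxA, by omega, by omega⟩
    · rintro ⟨hxA, h1', h2'⟩
      exact ⟨⟨by omega, hxA⟩, by omega⟩
  have hFmem : ∀ x, x ∈ F ↔ (x ∈ A ∧ s + 1 ≤ x ∧ x ≤ a - s)
      ∨ (a - s + 2 ≤ x ∧ x ≤ a + 1) := by
    intro x
    rw [hF, Finset.mem_union, Finset.mem_Icc, hCmem]
  have hcase' := hcase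
  rw [hs, ha, hd] at hcase'
  have hfr : franklin A = F := by
    rw [hF, hC, hs, ha]
    exact franklin_pos_le A h hcase'
  -- sums
  have hAsplit : A = (C ∪ Finset.Icc (a - s + 1) a) ∪ {s} := by
    ext x
    rw [Finset.mem_union, Finset.mem_union, Finset.mem_singleton, Finset.mem_Icc, hCmem]
    constructor
    · intro hxA
      have hb := hbounds x hxA
      by_cases hxs : x = s
      · right; exact hxs
      · left
        by_cases hxhi : a - s + 1 ≤ x
        · right; omega
        · left; exact ⟨hxA, by omega, by omega⟩
    · rintro ((⟨hxA, _, _⟩ | hxI) | rfl)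
      · exact hxA
      · exact hBsub (Finset.mem_Icc.mpr hxI)
      · exact hsmem
  have hdisj1 : Disjoint C (Finset.Icc (a - s + 1) a) := by
    rw [Finset.disjoint_left]
    intro x hx hx2
    rw [hCmem] at hx
    rw [Finset.mem_Icc] at hx2
    omega
  have hdisj2 : Disjoint (C ∪ Finset.Icc (a - s + 1) a) ({s} : Finset ℕ) := by
    rw [Finset.disjoint_right]
    intro x hx
    rw [Finset.mem_singleton] at hx
    subst hx
    rw [Finset.mem_union, hCmem, Finset.mem_Icc]
    push_neg
    exact ⟨fun _ h' => by omega, fun h' => by omega⟩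
  have hdisj3 : Disjoint C (Finset.Icc (a - s + 2) (a + 1)) := by
    rw [Finset.disjoint_left]
    intro x hx hx2
    rw [hCmem] at hx
    rw [Finset.mem_Icc] at hx2
    omega
  have hsumB' : ∑ x ∈ Finset.Icc (a - s + 2) (a + 1), x
      = (∑ x ∈ Finset.Icc (a - s + 1) a, x) + s := by
    have himg : Finset.Icc (a - s + 2) (a + 1)
        = (Finset.Icc (a - s + 1) a).image (fun x => x + 1) := by
      rw [Finset.image_add_right_Icc]
    rw [himg, Finset.sum_image (by intro x _ y _ hxy; exact Nat.add_right_cancel hxy)]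
    rw [Finset.sum_add_distrib, Finset.sum_const, smul_eq_mul, mul_one, Nat.card_Icc]
    omega
  have hsum : (∑ x ∈ F, x) = ∑ x ∈ A, x := by
    rw [hF, Finset.sum_union hdisj3, hsumB']
    conv_rhs => rw [hAsplit]
    rw [Finset.sum_union hdisj2, Finset.sum_union hdisj1, Finset.sum_singleton]
    ring
  -- membership facts about F
  have hFne : F.Nonempty := ⟨a + 1, by rw [hFmem]; right; omega⟩
  have hF0 : (0 : ℕ) ∉ F := by
    rw [hFmem]; push_neg
    exact ⟨fun _ h' => by omega, fun h' => by omega⟩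
  have hsF : s ∉ F := by
    rw [hFmem]; push_neg
    exact ⟨fun _ h' => by omega, fun h' => by omega⟩
  have hhF : F.Nonempty ∧ (0 : ℕ) ∉ F := ⟨hFne, hF0⟩
  -- parameters of F
  have hmaxF : F.max' hhF.1 = a + 1 := by
    apply max'_eq
    · rw [hFmem]; right; omega
    · intro x hx
      rw [hFmem] at hx
      rcases hx with ⟨_, _, h2'⟩ | ⟨_, h2'⟩ <;> omega
  have hminF : s + 1 ≤ F.min' hhF.1 := by
    apply Finset.le_min'
    intro x hx
    rw [hFmem] at hx
    rcases hx with ⟨_, h1', _⟩ | ⟨h1', _⟩ <;> omega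
  have hdF : fd F hhF = a - s + 1 := by
    apply fd_eq
    · rw [hFmem]; push_neg
      exact ⟨fun _ h' => by omega, fun h' => by omega⟩
    · rw [hmaxF]; omega
    · intro x hx1 hx2
      rw [hmaxF] at hx2
      rw [hFmem]
      right; omega
  have hcaseF : ¬ F.min' hhF.1 ≤ F.max' hhF.1 - fd F hhF := by
    rw [hmaxF, hdF]
    omega
  -- the inverse
  have hfrF : franklin F = ((F \ Finset.Icc (a - s + 2) (a + 1))
      ∪ Finset.Icc (a - s + 1) a) ∪ {s} := by
    have hfg := franklin_pos_gt F hhF hcaseF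
    rw [hmaxF, hdF] at hfg
    rw [hfg]
    have e1 : a - s + 1 + 1 = a - s + 2 := by omega
    have e2 : a + 1 - 1 = a := by omega
    have e3 : a + 1 - (a - s + 1) = s := by omega
    rw [e1, e2, e3]
  have hback : ((F \ Finset.Icc (a - s + 2) (a + 1))
      ∪ Finset.Icc (a - s + 1) a) ∪ {s} = A := by
    ext x
    rw [Finset.mem_union, Finset.mem_union, Finset.mem_sdiff, Finset.mem_singleton,
      Finset.mem_Icc, Finset.mem_Icc, hFmem]
    constructor
    · rintro ((⟨hF', hnB'⟩ | hxI) | rfl)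
      · rcases hF' with ⟨hxA, _, _⟩ | ⟨h1', h2'⟩
        · exact hxA
        · exact absurd ⟨h1', h2'⟩ hnB'
      · exact hBsub (Finset.mem_Icc.mpr hxI)
      · exact hsmem
    · intro hxA
      have hb := hbounds x hxA
      by_cases hxs : x = s
      · right; exact hxs
      · left
        by_cases hxhi : a - s + 1 ≤ x
        · right; omega
        · left; exact ⟨Or.inl ⟨hxA, by omega, by omega⟩, by omega⟩
  refine ⟨by rw [hfr]; exact hsum, by rw [hfr]; exact hsF, by rw [hfr]; exact hF0, ?_⟩
  rw [hfr, hfrF, hback]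

lemma case2 (A : Finset ℕ) (h : A.Nonempty ∧ 0 ∉ A) (s a d : ℕ)
    (hs : s = A.min' h.1) (ha : a = A.max' h.1) (hd : d = fd A h)
    (hcase : ¬ s ≤ a - d) (hnf : a < 2 * d) :
    (∑ x ∈ franklin A, x) = (∑ x ∈ A, x) ∧ a ∉ franklin A ∧ 0 ∉ franklin A ∧
      franklin (franklin A) = A := by
  have hs1 : 1 ≤ s := by
    have := A.min'_mem h.1
    rw [← hs] at this
    rcases Nat.eq_zero_or_pos s with h' | h'
    · exfalso; rw [h'] at this; exact h.2 this
    · exact h'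
  have hsa : s ≤ a := by
    rw [hs, ha]; exact Finset.min'_le _ _ (A.max'_mem h.1)
  have hbounds : ∀ x ∈ A, s ≤ x ∧ x ≤ a := by
    intro x hx; rw [hs, ha]; exact bounds_of_mem A h hx
  have hdlt : d < a := by rw [hd, ha]; exact fd_lt A h
  have hdnot : d ∉ A := by rw [hd]; exact fd_notMem A h
  have hrun : ∀ x, d < x → x ≤ a → x ∈ A := by
    rw [hd, ha]; exact fd_run A h
  have hsmem : s ∈ A := by rw [hs]; exact A.min'_mem h.1
  have hamem : a ∈ A := by rw [ha]; exact A.max'_mem h.1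
  have hd1 : 1 ≤ d := by omega
  have hsd : s ≤ d + 1 := (hbounds _ (hrun (d+1) (by omega) (by omega))).1
  have hsgt : a - d < s := by omega
  -- the image set
  set C : Finset ℕ := A \ Finset.Icc (d + 1) a with hC
  set G : Finset ℕ := (C ∪ Finset.Icc d (a - 1)) ∪ {a - d} with hG
  have hRsub : Finset.Icc (d + 1) a ⊆ A := by
    intro x hx
    rw [Finset.mem_Icc] at hx
    exact hrun x (by omega) hx.2
  have hCmem : ∀ x, x ∈ C ↔ x ∈ A ∧ s ≤ x ∧ x ≤ d - 1 := by
    intro x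
    rw [hC, Finset.mem_sdiff, Finset.mem_Icc]
    constructor
    · rintro ⟨hxA, hxB⟩
      have hb := hbounds x hxA
      have hxd : x ≠ d := by rintro rfl; exact hdnot hxA
      exact ⟨hxA, by omega, by omega⟩
    · rintro ⟨hxA, h1', h2'⟩
      exact ⟨hxA, by omega⟩
  have hGmem : ∀ x, x ∈ G ↔ (x ∈ A ∧ s ≤ x ∧ x ≤ d - 1)
      ∨ (d ≤ x ∧ x ≤ a - 1) ∨ x = a - d := by
    intro x
    rw [hG, Finset.mem_union, Finset.mem_union, Finset.mem_singleton, Finset.mem_Icc, hCmem]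
    tauto
  have hcase' := hcase
  rw [hs, ha, hd] at hcase'
  have hfr : franklin A = G := by
    rw [hG, hC, ha, hd]
    exact franklin_pos_gt A h hcase'
  -- sums
  have hAsplit : A = C ∪ Finset.Icc (d + 1) a := by
    ext x
    rw [Finset.mem_union, Finset.mem_Icc, hCmem]
    constructor
    · intro hxA
      have hb := hbounds x hxA
      have hxd : x ≠ d := by rintro rfl; exact hdnot hxA
      by_cases hx : d + 1 ≤ x
      · right; omega
      · left; exact ⟨hxA, by omega, by omega⟩
    · rintro (⟨hxA, _, _⟩ | hxI)
      · exact hxA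
      · exact hRsub (Finset.mem_Icc.mpr hxI)
  have hdisj1 : Disjoint C (Finset.Icc (d + 1) a) := by
    rw [Finset.disjoint_left]
    intro x hx hx2
    rw [hCmem] at hx
    rw [Finset.mem_Icc] at hx2
    omega
  have hdisj2 : Disjoint C (Finset.Icc d (a - 1)) := by
    rw [Finset.disjoint_left]
    intro x hx hx2
    rw [hCmem] at hx
    rw [Finset.mem_Icc] at hx2
    omega
  have hdisj3 : Disjoint (C ∪ Finset.Icc d (a - 1)) ({a - d} : Finset ℕ) := by
    rw [Finset.disjoint_right]
    intro x hx
    rw [Finset.mem_singleton] at hx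
    subst hx
    rw [Finset.mem_union, hCmem, Finset.mem_Icc]
    push_neg
    exact ⟨fun _ h' => by omega, fun h' => by omega⟩
  have hsumR : ∑ x ∈ Finset.Icc (d + 1) a, x
      = (∑ x ∈ Finset.Icc d (a - 1), x) + (a - d) := by
    have himg : Finset.Icc (d + 1) a
        = (Finset.Icc d (a - 1)).image (fun x => x + 1) := by
      rw [Finset.image_add_right_Icc]
      congr 1
      omega
    rw [himg, Finset.sum_image (by intro x _ y _ hxy; exact Nat.add_right_cancel hxy)]
    rw [Finset.sum_add_distrib, Finset.sum_const, smul_eq_mul, mul_one, Nat.card_Icc]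
    omega
  have hsum : (∑ x ∈ G, x) = ∑ x ∈ A, x := by
    rw [hG, Finset.sum_union hdisj3, Finset.sum_union hdisj2, Finset.sum_singleton]
    conv_rhs => rw [hAsplit]
    rw [Finset.sum_union hdisj1, hsumR]
    ring
  -- membership facts about G
  have hGne : G.Nonempty := ⟨a - d, by rw [hGmem]; right; right; rfl⟩
  have hG0 : (0 : ℕ) ∉ G := by
    rw [hGmem]; push_neg
    refine ⟨fun _ h' => by omega, fun h' => by omega, by omega⟩
  have haG : a ∉ G := by
    rw [hGmem]; push_neg
    refine ⟨fun _ h' => by omega, fun h' => by omega, by omega⟩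
  have hhG : G.Nonempty ∧ (0 : ℕ) ∉ G := ⟨hGne, hG0⟩
  -- parameters of G
  have hmaxG : G.max' hhG.1 = a - 1 := by
    apply max'_eq
    · rw [hGmem]; right; left; omega
    · intro x hx
      rw [hGmem] at hx
      rcases hx with ⟨_, _, h2'⟩ | ⟨_, h2'⟩ | rfl <;> omega
  have hminG : G.min' hhG.1 = a - d := by
    apply min'_eq
    · rw [hGmem]; right; right; rfl
    · intro x hx
      rw [hGmem] at hx
      rcases hx with ⟨_, h1', _⟩ | ⟨h1', _⟩ | rfl <;> omega
  have hdG : fd G hhG ≤ d - 1 := by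
    by_contra hlt
    push_neg at hlt
    apply fd_notMem G hhG
    rw [hGmem]
    right; left
    have h1' := fd_le G hhG
    rw [hmaxG] at h1'
    omega
  have hcaseG : G.min' hhG.1 ≤ G.max' hhG.1 - fd G hhG := by
    rw [hmaxG, hminG]
    omega
  -- the inverse
  have hfrG : franklin G = ((G.erase (a - d) \ Finset.Icc d (a - 1))
      ∪ Finset.Icc (d + 1) a) := by
    have hfg := franklin_pos_le G hhG hcaseG
    rw [hmaxG, hminG] at hfg
    rw [hfg]
    have e1 : a - 1 - (a - d) + 1 = d := by omega
    have e2 : a - 1 - (a - d) + 2 = d + 1 := by omega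
    have e3 : a - 1 + 1 = a := by omega
    rw [e1, e2, e3]
  have hback : ((G.erase (a - d) \ Finset.Icc d (a - 1))
      ∪ Finset.Icc (d + 1) a) = A := by
    ext x
    rw [Finset.mem_union, Finset.mem_sdiff, Finset.mem_erase,
      Finset.mem_Icc, Finset.mem_Icc, hGmem]
    constructor
    · rintro (⟨⟨hxne, hxG⟩, hnB⟩ | hxI)
      · rcases hxG with ⟨hxA, _, _⟩ | ⟨h1', h2'⟩ | h'
        · exact hxA
        · exact absurd ⟨h1', h2'⟩ hnB
        · exact absurd h' hxne
      · exact hRsub (Finset.mem_Icc.mpr hxI)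
    · intro hxA
      have hb := hbounds x hxA
      have hxd : x ≠ d := by rintro rfl; exact hdnot hxA
      by_cases hx : d + 1 ≤ x
      · right; omega
      · left
        refine ⟨⟨by omega, Or.inl ⟨hxA, by omega, by omega⟩⟩, by omega⟩
  refine ⟨by rw [hfr]; exact hsum, by rw [hfr]; exact haG, by rw [hfr]; exact hG0, ?_⟩
  rw [hfr, hfrG, hback]

lemma sum_Icc_pent (s a : ℕ) (hs1 : 1 ≤ s) (hsa : s ≤ a) :
    2 * (∑ x ∈ Finset.Icc s a, x) = (a + 1 - s) * (s + a) := by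
  rw [← Finset.Ico_add_one_right_eq_Icc, Finset.sum_Ico_eq_sum_range]
  rw [Finset.sum_add_distrib, Finset.sum_const, smul_eq_mul, Finset.card_range]
  have h := Finset.sum_range_id_mul_two (a + 1 - s)
  obtain ⟨c, hc⟩ : ∃ c, a + 1 - s = c + 1 := ⟨a - s, by omega⟩
  have hac : a = s + c := by omega
  have hc' : Nat.succ a - s = c + 1 := by omega
  rw [hc'] at *
  rw [hc] at h
  subst hac
  have h2 : (∑ x ∈ Finset.range (c + 1), x) * 2 = (c + 1) * c := by
    rw [h, Nat.add_sub_cancel]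
  rw [hc]
  zify at h2 ⊢
  nlinarith [h2]

lemma fp1 (A : Finset ℕ) (h : A.Nonempty ∧ 0 ∉ A) (s a d : ℕ)
    (hs : s = A.min' h.1) (ha : a = A.max' h.1) (hd : d = fd A h)
    (hcase : s ≤ a - d) (hnf : a < 2 * s) :
    ∃ t, 24 * (∑ x ∈ A, x) + 1 = t * t := by
  have hs1 : 1 ≤ s := by
    have := A.min'_mem h.1
    rw [← hs] at this
    rcases Nat.eq_zero_or_pos s with h' | h'
    · exfalso; rw [h'] at this; exact h.2 this
    · exact h'
  have hsa : s ≤ a := by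
    rw [hs, ha]; exact Finset.min'_le _ _ (A.max'_mem h.1)
  have hbounds : ∀ x ∈ A, s ≤ x ∧ x ≤ a := by
    intro x hx; rw [hs, ha]; exact bounds_of_mem A h hx
  have hdlt : d < a := by rw [hd, ha]; exact fd_lt A h
  have hrun : ∀ x, d < x → x ≤ a → x ∈ A := by
    rw [hd, ha]; exact fd_run A h
  have hmem : a - s + 1 ∈ A := hrun _ (by omega) (by omega)
  have h1 := (hbounds _ hmem).1
  have hAeq : A = Finset.Icc s a := by
    ext x
    rw [Finset.mem_Icc]
    constructor
    · intro hx; exact hbounds x hx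
    · intro hx; exact hrun x (by omega) hx.2
  have hsum := sum_Icc_pent s a hs1 hsa
  rw [hAeq]
  obtain ⟨u, rfl⟩ : ∃ u, s = u + 1 := ⟨s - 1, by omega⟩
  have haeq : a = 2 * u + 1 := by omega
  subst haeq
  have h2m : 2 * (∑ x ∈ Finset.Icc (u + 1) (2 * u + 1), x) = (u + 1) * (3 * u + 2) := by
    rw [hsum]
    have e1 : 2 * u + 1 + 1 - (u + 1) = u + 1 := by omega
    have e2 : u + 1 + (2 * u + 1) = 3 * u + 2 := by omega
    rw [e1, e2]
  refine ⟨6 * u + 5, ?_⟩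
  have hstep : 24 * (∑ x ∈ Finset.Icc (u + 1) (2 * u + 1), x) + 1
      = 12 * (2 * (∑ x ∈ Finset.Icc (u + 1) (2 * u + 1), x)) + 1 := by ring
  rw [hstep, h2m]
  ring

lemma fp2 (A : Finset ℕ) (h : A.Nonempty ∧ 0 ∉ A) (s a d : ℕ)
    (hs : s = A.min' h.1) (ha : a = A.max' h.1) (hd : d = fd A h)
    (hcase : ¬ s ≤ a - d) (hnf : 2 * d ≤ a) :
    ∃ t, 24 * (∑ x ∈ A, x) + 1 = t * t := by
  have hsa : s ≤ a := by
    rw [hs, ha]; exact Finset.min'_le _ _ (A.max'_mem h.1)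
  have hbounds : ∀ x ∈ A, s ≤ x ∧ x ≤ a := by
    intro x hx; rw [hs, ha]; exact bounds_of_mem A h hx
  have hdlt : d < a := by rw [hd, ha]; exact fd_lt A h
  have hdnot : d ∉ A := by rw [hd]; exact fd_notMem A h
  have hrun : ∀ x, d < x → x ≤ a → x ∈ A := by
    rw [hd, ha]; exact fd_run A h
  have hsd : s ≤ d + 1 := (hbounds _ (hrun (d+1) (by omega) (by omega))).1
  have hseq : s = d + 1 := by omega
  have haeq : a = 2 * d := by omega
  have hAeq : A = Finset.Icc (d + 1) a := by
    ext x
    rw [Finset.mem_Icc]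
    constructor
    · intro hx
      have hb := hbounds x hx
      omega
    · intro hx; exact hrun x (by omega) hx.2
  have hd1 : 1 ≤ d := by omega
  have hsum := sum_Icc_pent (d + 1) a (by omega) (by omega)
  rw [hAeq]
  subst haeq
  have h2m : 2 * (∑ x ∈ Finset.Icc (d + 1) (2 * d), x) = d * (3 * d + 1) := by
    rw [hsum]
    have e1 : 2 * d + 1 - (d + 1) = d := by omega
    have e2 : d + 1 + 2 * d = 3 * d + 1 := by omega
    rw [e1, e2]
  refine ⟨6 * d + 1, ?_⟩
  have hstep : 24 * (∑ x ∈ Finset.Icc (d + 1) (2 * d), x) + 1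
      = 12 * (2 * (∑ x ∈ Finset.Icc (d + 1) (2 * d), x)) + 1 := by ring
  rw [hstep, h2m]
  ring

theorem franklin_main (A : Finset ℕ) (h1 : A.Nonempty) (h2 : 0 ∉ A)
    (hsq : ¬ ∃ t, 24 * (∑ x ∈ A, x) + 1 = t * t) :
    (∑ x ∈ franklin A, x) = (∑ x ∈ A, x) ∧ franklin A ≠ A ∧ 0 ∉ franklin A
      ∧ franklin (franklin A) = A := by
  have h : A.Nonempty ∧ 0 ∉ A := ⟨h1, h2⟩
  by_cases hcase : A.min' h.1 ≤ A.max' h.1 - fd A h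
  · have hnf : 2 * A.min' h.1 ≤ A.max' h.1 := by
      by_contra hlt
      push_neg at hlt
      exact hsq (fp1 A h _ _ _ rfl rfl rfl hcase hlt)
    obtain ⟨hsum, hnot, h0, hinv⟩ := case1 A h _ _ _ rfl rfl rfl hcase hnf
    refine ⟨hsum, ?_, h0, hinv⟩
    intro heq
    rw [heq] at hnot
    exact hnot (A.min'_mem h.1)
  · have hnf : A.max' h.1 < 2 * fd A h := by
      by_contra hlt
      push_neg at hlt
      exact hsq (fp2 A h _ _ _ rfl rfl rfl hcase hlt)
    obtain ⟨hsum, hnot, h0, hinv⟩ := case2 A h _ _ _ rfl rfl rfl hcase hnf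
    refine ⟨hsum, ?_, h0, hinv⟩
    intro heq
    rw [heq] at hnot
    exact hnot (A.max'_mem h.1)

lemma key_decomp (p k n j : ℕ) (hp : p.Prime) (hp5 : 5 ≤ p) (hp3 : p % 3 = 2)
    (hj : ¬ p ∣ j) :
    ∃ u, 5 ≤ u ∧ ¬ p ∣ u ∧
      3 * (p ^ (2 * (k + 1)) * n + p ^ (2 * k + 1) * j + (p ^ (2 * (k + 1)) - 1) / 3) + 1
        = p ^ (2 * k + 1) * u := by
  refine ⟨3 * p * n + 3 * j + p, by omega, ?_, ?_⟩
  · intro hdvd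
    have h1 : p ∣ (3 * n + 1) * p := Dvd.intro_left _ rfl
    have e : 3 * p * n + 3 * j + p = (3 * n + 1) * p + 3 * j := by ring
    rw [e] at hdvd
    have h2 : p ∣ 3 * j := (Nat.dvd_add_right h1).mp hdvd
    rcases (Nat.Prime.dvd_mul hp).mp h2 with h3 | h3
    · have := Nat.le_of_dvd (by norm_num) h3
      omega
    · exact hj h3
  · have hdiv3 : 3 ∣ p ^ (2 * (k + 1)) - 1 := by
      suffices hmod : p ^ (2 * (k + 1)) % 3 = 1 by
        have hpos : 1 ≤ p ^ (2 * (k + 1)) := Nat.one_le_pow _ _ (by omega)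
        omega
      rw [Nat.pow_mod, hp3, pow_mul]
      norm_num [Nat.pow_mod]
    have hsub : 3 * ((p ^ (2 * (k + 1)) - 1) / 3) = p ^ (2 * (k + 1)) - 1 :=
      Nat.mul_div_cancel' hdiv3
    have hpp : p ^ (2 * (k + 1)) = p ^ (2 * k + 1) * p := by
      rw [← pow_succ]
      congr 1
    have hpos : 1 ≤ p ^ (2 * (k + 1)) := Nat.one_le_pow _ _ (by omega)
    set P := p ^ (2 * k + 1) with hP
    calc 3 * (p ^ (2 * (k + 1)) * n + P * j + (p ^ (2 * (k + 1)) - 1) / 3) + 1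
        = 3 * (p ^ (2 * (k + 1)) * n) + 3 * (P * j)
          + 3 * ((p ^ (2 * (k + 1)) - 1) / 3) + 1 := by ring
      _ = 3 * (p ^ (2 * (k + 1)) * n) + 3 * (P * j) + p ^ (2 * (k + 1)) := by
          rw [hsub]; omega
      _ = 3 * (P * p * n) + 3 * (P * j) + P * p := by rw [hpp]
      _ = P * (3 * p * n + 3 * j + p) := by ring

lemma odd_val_not_square (p e u : ℕ) (hp : p.Prime) (hu : ¬ p ∣ u) (hu0 : u ≠ 0)
    (he : e % 2 = 1) : ¬ ∃ t, p ^ e * u = t * t := by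
  rintro ⟨t, ht⟩
  have ht0 : t ≠ 0 := by
    rintro rfl
    rw [mul_zero] at ht
    exact absurd (mul_eq_zero.mp ht) (by push_neg; exact ⟨pow_ne_zero _ hp.pos.ne', hu0⟩)
  have h1 : (p ^ e * u).factorization p = e := by
    rw [Nat.factorization_mul (pow_ne_zero _ hp.pos.ne') hu0, Finsupp.add_apply,
      hp.factorization_pow, Nat.factorization_eq_zero_of_not_dvd hu]
    simp
  have h2 : (t * t).factorization p = 2 * t.factorization p := by
    rw [Nat.factorization_mul ht0 ht0, Finsupp.add_apply]
    ring
  rw [ht, h2] at h1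
  omega

theorem EObar_dvd_main (p : ℕ) (hp : p.Prime) (hp5 : 5 ≤ p) (hp3 : p % 3 = 2)
    (EObar : ℕ → ℕ)
    (h : PowerSeries.mk (fun n => (EObar n : ℚ)) = qp 4 4 ^ 3 * (qp 2 2 ^ 2)⁻¹)
    (k n j : ℕ) (hj : ¬ p ∣ j) :
    2 ∣ EObar (p ^ (2 * (k + 1)) * n + p ^ (2 * k + 1) * j +
      (p ^ (2 * (k + 1)) - 1) / 3) := by
  classical
  set N := p ^ (2 * (k + 1)) * n + p ^ (2 * k + 1) * j + (p ^ (2 * (k + 1)) - 1) / 3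
    with hNdef
  obtain ⟨u, hu5, hpu, hNu⟩ := key_decomp p k n j hp hp5 hp3 hj
  rw [← hNdef] at hNu
  have hP5 : 5 ≤ p ^ (2 * k + 1) := le_trans hp5 (Nat.le_self_pow (by omega) p)
  have hNpos : 8 ≤ 3 * N + 1 := by
    have : 25 ≤ p ^ (2 * k + 1) * u := Nat.mul_le_mul hP5 hu5
    omega
  have hnsq : ¬ ∃ t, 3 * N + 1 = t * t := by
    rintro ⟨t, ht⟩
    exact odd_val_not_square p (2 * k + 1) u hp hpu (by omega) (by omega)
      ⟨t, by rw [← hNu]; exact ht⟩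
  have hmk := EObar_eq_qp88 EObar h
  have hco : ((EObar N : ZMod 2)) = PowerSeries.coeff (R := ZMod 2) N (qpR (ZMod 2) 8 8) := by
    rw [← hmk, PowerSeries.coeff_mk]
  rw [coeff_qp88 N] at hco
  have hmain : ∀ A ∈ (Finset.Icc 1 (N + 1)).powerset, N = 8 * ∑ y ∈ A, y →
      (∑ x ∈ franklin A, x) = (∑ x ∈ A, x) ∧ franklin A ≠ A ∧ 0 ∉ franklin A
        ∧ franklin (franklin A) = A := by
    intro A ha hc
    have hsub : A ⊆ Finset.Icc 1 (N + 1) := Finset.mem_powerset.mp ha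
    have h0A : 0 ∉ A := by
      intro h0
      have := hsub h0
      rw [Finset.mem_Icc] at this
      omega
    have hAne : A.Nonempty := by
      rw [Finset.nonempty_iff_ne_empty]
      rintro rfl
      rw [Finset.sum_empty] at hc
      omega
    apply franklin_main A hAne h0A
    rintro ⟨t, ht⟩
    exact hnsq ⟨t, by omega⟩
  have hzero : (∑ A ∈ (Finset.Icc 1 (N + 1)).powerset,
      if N = 8 * ∑ y ∈ A, y then (1 : ZMod 2) else 0) = 0 := by
    apply Finset.sum_involution
      (fun A _ => if N = 8 * ∑ y ∈ A, y then franklin A else A)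
    · intro A ha
      by_cases hc : N = 8 * ∑ y ∈ A, y
      · have hc2 : N = 8 * ∑ y ∈ franklin A, y := by
          rw [(hmain A ha hc).1]; exact hc
        simp only [if_pos hc, if_pos hc2]
        decide
      · simp only [if_neg hc]
        decide
    · intro A ha hfne
      by_cases hc : N = 8 * ∑ y ∈ A, y
      · simp only [if_pos hc]
        exact (hmain A ha hc).2.1
      · exfalso; exact hfne (if_neg hc)
    · intro A ha
      by_cases hc : N = 8 * ∑ y ∈ A, y
      · simp only [if_pos hc]
        rw [Finset.mem_powerset]
        intro x hx
        rw [Finset.mem_Icc]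
        have hle : x ≤ ∑ y ∈ franklin A, y :=
          Finset.single_le_sum (fun i _ => Nat.zero_le i) hx
        rw [(hmain A ha hc).1] at hle
        have h0 : 0 ∉ franklin A := (hmain A ha hc).2.2.1
        constructor
        · rcases Nat.eq_zero_or_pos x with rfl | h'
          · exact absurd hx h0
          · exact h'
        · omega
      · simp only [if_neg hc]; exact ha
    · intro A ha
      by_cases hc : N = 8 * ∑ y ∈ A, y
      · have hc2 : N = 8 * ∑ y ∈ franklin A, y := by
          rw [(hmain A ha hc).1]; exact hc
        simp only [if_pos hc, if_pos hc2]
        exact (hmain A ha hc).2.2.2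
      · simp only [if_neg hc]
  rw [hzero] at hco
  exact (ZMod.natCast_eq_zero_iff (EObar N) 2).mp hco

/-- For a prime `p ≥ 5` with `p ≡ 2 (mod 3)`, `k, n ≥ 0` and `p ∤ j`:
`EObar(p^{2(k+1)} n + p^{2k+1} j + (p^{2(k+1)}-1)/3) ≡ 0 (mod 2)`; in particular
`EObar(25n + 5j + 8) ≡ 0 (mod 2)` whenever `5 ∤ j`. -/
theorem EObar_prime_power_family_mod_two :
    (∀ (p : ℕ), p.Prime → 5 ≤ p → p % 3 = 2 →
      ∀ (EObar : ℕ → ℕ),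
        PowerSeries.mk (fun n => (EObar n : ℚ)) = qp 4 4 ^ 3 * (qp 2 2 ^ 2)⁻¹ →
        ∀ (k n j : ℕ), ¬ p ∣ j →
          2 ∣ EObar (p ^ (2 * (k + 1)) * n + p ^ (2 * k + 1) * j +
            (p ^ (2 * (k + 1)) - 1) / 3)) ∧
    (∀ (EObar : ℕ → ℕ),
      PowerSeries.mk (fun n => (EObar n : ℚ)) = qp 4 4 ^ 3 * (qp 2 2 ^ 2)⁻¹ →
      ∀ (n j : ℕ), ¬ 5 ∣ j → 2 ∣ EObar (25 * n + 5 * j + 8)) := by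
  constructor
  · intro p hp hp5 hp3 EObar h k n j hj
    exact EObar_dvd_main p hp hp5 hp3 EObar h k n j hj
  · intro EObar h n j hj
    have := EObar_dvd_main 5 (by norm_num) (by norm_num) (by norm_num) EObar h 0 n j hj
    norm_num at this
    exact this
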